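/- Let A be an algebra, d a left Leibniz-derivation of order n of A, and x_1,...,x_{n-1} ∈ A. Then the commutator of d with the left multiplication operator by the left-normed product [x_1,...,x_{n-1}]_{l(n-1)} satisfies [d, L_{[x_1,...,x_{n-1}]}] = Σ_{i=1}^{n-1} L_{[x_1,...,d(x_i),...,x_{n-1}]}. -/

import Mathlib

/-- Left-normed product `((...(x₁x₂)...)x_{n-1})x_n` (junk value `0` for `n = 0`). -/
def lnProd {A : Type*} [Mul A] [Zero A] : ∀ {n : ℕ}, (Fin n → A) → A
  | 0, _ => 0
  | _ + 1, x => (List.ofFn fun i => x i.succ).foldl (· * ·) (x 0)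

/-- `d` is a left Leibniz-derivation of order `n`. -/
def IsLeftLeibnizDer (F : Type*) {A : Type*} [Field F] [NonUnitalNonAssocRing A]
    [Module F A] (n : ℕ) (d : A →ₗ[F] A) : Prop :=
  ∀ x : Fin n → A, d (lnProd x) = ∑ i, lnProd (Function.update x i (d (x i)))

/-- Arrangements of brackets on a product of `n` factors. -/
inductive BTree : ℕ → Type
  | leaf : BTree 1
  | node : ∀ {m k : ℕ}, BTree m → BTree k → BTree (m + k)

/-- The product of `x 0, ..., x (n-1)` with the arrangement of brackets `t`. -/
def BTree.eval {A : Type*} [Mul A] : ∀ {n : ℕ}, BTree n → (Fin n → A) → A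
  | _, .leaf, x => x 0
  | _, .node (m := m) (k := k) t u, x =>
      (BTree.eval t fun i => x (Fin.castAdd k i)) * (BTree.eval u fun j => x (Fin.natAdd m j))

/-- `d` is an `f`-Leibniz-derivation for the arrangement of brackets `t`. -/
def IsLeibnizDerWrt (F : Type*) {A : Type*} [Field F] [NonUnitalNonAssocRing A]
    [Module F A] {n : ℕ} (t : BTree n) (d : A →ₗ[F] A) : Prop :=
  ∀ x : Fin n → A, d (t.eval x) = ∑ i, t.eval (Function.update x i (d (x i)))

/-- The product of two submodules of a (nonassociative, nonunital) algebra: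
the span of all products `s * t`, `s ∈ S`, `t ∈ T`. -/
def subMul (F : Type*) {A : Type*} [Field F] [NonUnitalNonAssocRing A] [Module F A]
    (S T : Submodule F A) : Submodule F A :=
  Submodule.span F {z | ∃ s ∈ S, ∃ t ∈ T, z = s * t}

/-- `algPow F S k` is the power `S^(k+1)`, where `S^1 = S` and
`S^n = Σ_{i=1}^{n-1} S^i S^(n-i)`. -/
def algPow (F : Type*) {A : Type*} [Field F] [NonUnitalNonAssocRing A] [Module F A]
    (S : Submodule F A) : ℕ → Submodule F A
  | 0 => S
  | n + 1 => ⨆ i : Fin (n + 1), subMul F (algPow F S i) (algPow F S (n - (i : ℕ)))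
  termination_by k => k
  decreasing_by all_goals omega

/-- `rpow F S k` is the right power `S^<k+1>`: `S^<1> = S`, `S^<n> = S^<n-1> S`. -/
def rpow (F : Type*) {A : Type*} [Field F] [NonUnitalNonAssocRing A] [Module F A]
    (S : Submodule F A) : ℕ → Submodule F A
  | 0 => S
  | n + 1 => subMul F (rpow F S n) S

theorem lnProd_snoc {A : Type*} [Mul A] [Zero A] {m : ℕ} (x : Fin (m + 1) → A) (a : A) :
    lnProd (Fin.snoc x a) = lnProd x * a := by
  show lnProd (Fin.snoc x a : Fin (m + 1 + 1) → A) = _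
  rw [show (lnProd (Fin.snoc x a : Fin (m + 1 + 1) → A)) =
    (List.ofFn fun i : Fin (m + 1) => (Fin.snoc x a : Fin (m + 2) → A) i.succ).foldl (· * ·)
      ((Fin.snoc x a : Fin (m + 2) → A) 0) from rfl]
  have h0 : (Fin.snoc x a : Fin (m + 2) → A) 0 = x 0 := by
    have : (0 : Fin (m + 2)) = Fin.castSucc 0 := rfl
    rw [this, Fin.snoc_castSucc]
  have hl : (List.ofFn fun i : Fin (m + 1) => (Fin.snoc x a : Fin (m + 2) → A) i.succ) =
      (List.ofFn fun i : Fin m => x i.succ).concat a := by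
    rw [List.ofFn_succ']
    simp only [Fin.succ_castSucc, Fin.snoc_castSucc]
    congr 1
    show (Fin.snoc x a : Fin (m + 2) → A) (Fin.last m).succ = a
    have : (Fin.last m).succ = Fin.last (m + 1) := rfl
    rw [this, Fin.snoc_last]
  rw [hl, h0, List.concat_eq_append, List.foldl_append, List.foldl_cons, List.foldl_nil]
  rfl

/-- commutator of a left Leibniz-derivation of order `n = m + 2` with the
left multiplication by a left-normed product of `n - 1` elements. -/
theorem stmt10 {F A : Type*} [Field F] [NonUnitalNonAssocRing A] [Module F A]
    [SMulCommClass F A A] [IsScalarTower F A A]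
    {m : ℕ} (d : A →ₗ[F] A) (hd : IsLeftLeibnizDer F (m + 2) d) (x : Fin (m + 1) → A) :
    d ∘ₗ LinearMap.mulLeft F (lnProd x) - LinearMap.mulLeft F (lnProd x) ∘ₗ d =
      ∑ i, LinearMap.mulLeft F (lnProd (Function.update x i (d (x i)))) := by
  ext a
  have key := hd (Fin.snoc x a)
  rw [lnProd_snoc, Fin.sum_univ_castSucc] at key
  have hlast : lnProd (Function.update (Fin.snoc x a) (Fin.last (m + 1))
      (d ((Fin.snoc x a : Fin (m + 2) → A) (Fin.last (m + 1))))) = lnProd x * d a := by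
    rw [Fin.snoc_last, Fin.update_snoc_last, lnProd_snoc]
  have hcast : ∀ i : Fin (m + 1), lnProd (Function.update (Fin.snoc x a) i.castSucc
      (d ((Fin.snoc x a : Fin (m + 2) → A) i.castSucc))) = lnProd (Function.update x i (d (x i))) * a := by
    intro i
    rw [Fin.snoc_castSucc, ← Fin.snoc_update, lnProd_snoc]
  simp only [hlast, hcast] at key
  simp only [LinearMap.sub_apply, LinearMap.coe_comp, Function.comp_apply,
    LinearMap.mulLeft_apply, LinearMap.coe_sum, Finset.sum_apply]
  rw [key]
  abel_nf
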